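/- For every complex scalar s with |s| ≤ 1 and every γ ∈ (0,1), the Hermitian matrix D(−I + sγP) + (−I + s̄γPᵀ)D satisfies D(−I + sγP) + (−I + s̄γPᵀ)D ⪯ 2(γ−1)D, i.e., for all z ∈ ℂ^N one has zᴴ(D(−I + sγP) + (−I + s̄γPᵀ)D)z ≤ 2(γ−1)·zᴴDz; in particular this matrix is negative definite. -/

import Mathlib

open Matrix BigOperators

/-- For every complex `s` with `|s| ≤ 1` and every `γ ∈ (0,1)`, the
Hermitian matrix `D(−I + sγP) + (−I + s̄γPᵀ)D` satisfies
`D(−I + sγP) + (−I + s̄γPᵀ)D ⪯ 2(γ−1)D`, i.e. for all `z ∈ ℂ^N` one has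
`zᴴ(D(−I + sγP) + (−I + s̄γPᵀ)D)z ≤ 2(γ−1)·zᴴDz`; in particular this matrix is
negative definite. -/
theorem target_td_key_matrix_negative_definite
    (N : ℕ) (hN : 0 < N)
    (P : Matrix (Fin N) (Fin N) ℝ) (d : Fin N → ℝ) (γ : ℝ)
    (hPnonneg : ∀ i j, 0 ≤ P i j)
    (hProw : ∀ i, ∑ j, P i j = 1)
    (hdpos : ∀ s, 0 < d s)
    (hdsum : ∑ s, d s = 1)
    (hstat : Matrix.vecMul d P = d)
    (hγ0 : 0 < γ) (hγ1 : γ < 1)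
    (s : ℂ) (hs : ‖s‖ ≤ 1) :
    let Pc : Matrix (Fin N) (Fin N) ℂ := P.map (fun x : ℝ => (x : ℂ))
    let Dc : Matrix (Fin N) (Fin N) ℂ := Matrix.diagonal (fun i => ((d i : ℂ)))
    let M : Matrix (Fin N) (Fin N) ℂ :=
      Dc * (-1 + (s * (γ : ℂ)) • Pc) + (-1 + ((starRingEnd ℂ) s * (γ : ℂ)) • Pcᵀ) * Dc
    (∀ z : Fin N → ℂ,
        (star z ⬝ᵥ M.mulVec z).re ≤ 2 * (γ - 1) * (star z ⬝ᵥ Dc.mulVec z).re) ∧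
    (∀ z : Fin N → ℂ, z ≠ 0 → (star z ⬝ᵥ M.mulVec z).re < 0) := by
  intro Pc Dc M
  have hDv : ∀ v : Fin N → ℂ, Dc.mulVec v = fun i => (d i : ℂ) * v i := by
    intro v; funext i; simp [Dc, Matrix.mulVec_diagonal]
  have hstat' : ∀ j, ∑ i, d i * P i j = d j := by
    intro j
    have := congrFun hstat j
    simpa [Matrix.vecMul, dotProduct] using this
  -- the real quadratic form of D
  have hE : ∀ z : Fin N → ℂ,
      (star z ⬝ᵥ Dc.mulVec z).re = ∑ i, d i * Complex.normSq (z i) := by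
    intro z
    rw [hDv]
    simp only [dotProduct, Pi.star_apply, RCLike.star_def, Complex.re_sum]
    congr 1; funext i
    simp [Complex.mul_re, Complex.normSq_apply]
    ring
  -- main estimate, giving both statements
  have key : ∀ z : Fin N → ℂ,
      (star z ⬝ᵥ M.mulVec z).re ≤ 2 * (γ - 1) * (∑ i, d i * Complex.normSq (z i)) := by
    intro z
    set E : ℝ := ∑ i, d i * Complex.normSq (z i) with hEdef
    set Q : ℂ := ∑ i, ∑ j, (starRingEnd ℂ) (z i) * (d i : ℂ) * (P i j : ℂ) * z j with hQdef
    -- identify the pieces of M applied to z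
    have hQ : (star z ⬝ᵥ Dc.mulVec (Pc.mulVec z)) = Q := by
      rw [hDv]
      simp only [Pc, dotProduct, Matrix.mulVec, Matrix.map_apply,
        Pi.star_apply, RCLike.star_def, Finset.mul_sum]
      rw [hQdef]
      congr 1; funext i; congr 1; funext j; ring
    have hR : (star z ⬝ᵥ Pcᵀ.mulVec (Dc.mulVec z)) = (starRingEnd ℂ) Q := by
      rw [hDv]
      simp only [Pc, dotProduct, Matrix.mulVec, Matrix.map_apply,
        Matrix.transpose_apply, Pi.star_apply, RCLike.star_def, Finset.mul_sum]
      rw [hQdef]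
      simp only [map_sum, _root_.map_mul, Complex.conj_conj, Complex.conj_ofReal]
      rw [Finset.sum_comm]
      congr 1; funext i; congr 1; funext j; ring
    have hW : (star z ⬝ᵥ Dc.mulVec z).re = E := hE z
    have hM1 : (Dc * (-1 + (s * (γ : ℂ)) • Pc)).mulVec z
        = -(Dc.mulVec z) + (s * (γ : ℂ)) • Dc.mulVec (Pc.mulVec z) := by
      rw [← Matrix.mulVec_mulVec]
      simp [Matrix.add_mulVec, Matrix.neg_mulVec, Matrix.mulVec_add, Matrix.mulVec_neg,
        Matrix.smul_mulVec, Matrix.mulVec_smul]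
    have hM2 : ((-1 + ((starRingEnd ℂ) s * (γ : ℂ)) • Pcᵀ) * Dc).mulVec z
        = -(Dc.mulVec z) + ((starRingEnd ℂ) s * (γ : ℂ)) • Pcᵀ.mulVec (Dc.mulVec z) := by
      simp [add_mul, Matrix.add_mulVec, Matrix.neg_mulVec, Matrix.smul_mul,
        Matrix.smul_mulVec, Matrix.mulVec_mulVec]
    have hform : (star z ⬝ᵥ M.mulVec z)
        = -(star z ⬝ᵥ Dc.mulVec z) + (s * (γ : ℂ)) * Q
          + (-(star z ⬝ᵥ Dc.mulVec z) + ((starRingEnd ℂ) s * (γ : ℂ)) * (starRingEnd ℂ) Q) := by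
      have : M.mulVec z = (Dc * (-1 + (s * (γ : ℂ)) • Pc)).mulVec z
          + ((-1 + ((starRingEnd ℂ) s * (γ : ℂ)) • Pcᵀ) * Dc).mulVec z := by
        simp [M, Matrix.add_mulVec]
      rw [this, dotProduct_add, hM1, hM2]
      simp only [dotProduct_add, dotProduct_neg, dotProduct_smul, hQ, hR, smul_eq_mul]
    -- real part of the form
    have hre : (star z ⬝ᵥ M.mulVec z).re = -2 * E + 2 * γ * (s * Q).re := by
      rw [hform]
      have h1 : ((s * (γ : ℂ)) * Q).re = γ * (s * Q).re := by
        have : (s * (γ : ℂ)) * Q = (γ : ℂ) * (s * Q) := by ring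
        rw [this, Complex.re_ofReal_mul]
      have h2 : (((starRingEnd ℂ) s * (γ : ℂ)) * (starRingEnd ℂ) Q).re = γ * (s * Q).re := by
        have : ((starRingEnd ℂ) s * (γ : ℂ)) * (starRingEnd ℂ) Q
            = (γ : ℂ) * (starRingEnd ℂ) (s * Q) := by
          rw [_root_.map_mul]; ring_nf
        rw [this, Complex.re_ofReal_mul, Complex.conj_re]
      simp only [Complex.add_re, Complex.neg_re, h1, h2, hW]
      ring
    -- key bound : (s*Q).re ≤ E
    have hQbound : (s * Q).re ≤ E := by
      have habs : ‖Q‖ ≤ ∑ i, ∑ j, d i * P i j * (‖z i‖ * ‖z j‖) := by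
        rw [hQdef]
        refine le_trans (norm_sum_le _ _) (Finset.sum_le_sum fun i _ => ?_)
        refine le_trans (norm_sum_le _ _) (Finset.sum_le_sum fun j _ => ?_)
        simp only [norm_mul, Complex.norm_conj, Complex.norm_real, Real.norm_eq_abs]
        rw [abs_of_nonneg (hdpos i).le, abs_of_nonneg (hPnonneg i j)]
        ring_nf; exact le_refl _
      have hsum : ∑ i, ∑ j, d i * P i j * (‖z i‖ * ‖z j‖) ≤ E := by
        have step : ∀ i j, d i * P i j * (‖z i‖ * ‖z j‖)
            ≤ d i * P i j * ((Complex.normSq (z i) + Complex.normSq (z j)) / 2) := by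
          intro i j
          have hnn : 0 ≤ d i * P i j := mul_nonneg (hdpos i).le (hPnonneg i j)
          refine mul_le_mul_of_nonneg_left ?_ hnn
          have ha := Complex.sq_norm (z i)
          have hb := Complex.sq_norm (z j)
          nlinarith [sq_nonneg (‖z i‖ - ‖z j‖)]
        calc ∑ i, ∑ j, d i * P i j * (‖z i‖ * ‖z j‖)
            ≤ ∑ i, ∑ j, d i * P i j * ((Complex.normSq (z i) + Complex.normSq (z j)) / 2) :=
              Finset.sum_le_sum fun i _ => Finset.sum_le_sum fun j _ => step i j
          _ = E := by
              have e1 : ∑ i, ∑ j, d i * P i j * Complex.normSq (z i) = E := by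
                rw [hEdef]
                refine Finset.sum_congr rfl fun i _ => ?_
                calc ∑ j, d i * P i j * Complex.normSq (z i)
                    = (d i * Complex.normSq (z i)) * ∑ j, P i j := by
                      rw [Finset.mul_sum]; exact Finset.sum_congr rfl fun j _ => by ring
                  _ = d i * Complex.normSq (z i) := by rw [hProw i, mul_one]
              have e2 : ∑ i, ∑ j, d i * P i j * Complex.normSq (z j) = E := by
                rw [hEdef, Finset.sum_comm]
                refine Finset.sum_congr rfl fun j _ => ?_
                calc ∑ i, d i * P i j * Complex.normSq (z j)
                    = (∑ i, d i * P i j) * Complex.normSq (z j) := by rw [Finset.sum_mul]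
                  _ = d j * Complex.normSq (z j) := by rw [hstat' j]
              calc ∑ i, ∑ j, d i * P i j * ((Complex.normSq (z i) + Complex.normSq (z j)) / 2)
                  = (∑ i, ∑ j, d i * P i j * Complex.normSq (z i)
                     + ∑ i, ∑ j, d i * P i j * Complex.normSq (z j)) / 2 := by
                    rw [← Finset.sum_add_distrib, Finset.sum_div]
                    refine Finset.sum_congr rfl fun i _ => ?_
                    rw [← Finset.sum_add_distrib, Finset.sum_div]
                    exact Finset.sum_congr rfl fun j _ => by ring
                _ = E := by rw [e1, e2]; ring
      have := Complex.re_le_norm (s * Q)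
      calc (s * Q).re ≤ ‖s * Q‖ := Complex.re_le_norm _
        _ = ‖s‖ * ‖Q‖ := norm_mul _ _
        _ ≤ 1 * ‖Q‖ := by
            exact mul_le_mul_of_nonneg_right hs (norm_nonneg _)
        _ = ‖Q‖ := one_mul _
        _ ≤ _ := le_trans habs hsum
    rw [hre]
    have hEnn : 0 ≤ E := Finset.sum_nonneg fun i _ => mul_nonneg (hdpos i).le (Complex.normSq_nonneg _)
    nlinarith
  constructor
  · intro z
    rw [hE z]
    exact key z
  · intro z hz
    have hEpos : 0 < ∑ i, d i * Complex.normSq (z i) := by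
      obtain ⟨i, hi⟩ := Function.ne_iff.mp hz
      refine Finset.sum_pos' (fun j _ => mul_nonneg (hdpos j).le (Complex.normSq_nonneg _)) ⟨i, Finset.mem_univ i, ?_⟩
      have : 0 < Complex.normSq (z i) := by
        simpa [Complex.normSq_pos] using hi
      exact mul_pos (hdpos i) this
    have := key z
    nlinarith
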